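/- For every alphabet Σ with at least two symbols, the family O(Σ) of observable regular languages with minimal alphabet Σ is closed under union. -/

import Mathlib

open Computability

/-- A state `q` of a DFA is *observable* if some word leads from it to an accepting state. -/
def ObsState {α σ : Type} (M : DFA α σ) (q : σ) : Prop :=
  ∃ w : List α, M.evalFrom q w ∈ M.accept

/-- A state is *semi-observable* if it is observable and some single input symbol
leads from it to a non-observable state. -/
def SemiObsState {α σ : Type} (M : DFA α σ) (q : σ) : Prop :=
  ObsState M q ∧ ∃ a : α, ¬ ObsState M (M.step q a)

/-- All states of the DFA are accessible from the start state. -/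
def Accessible {α σ : Type} (M : DFA α σ) : Prop :=
  ∀ q : σ, ∃ w : List α, M.eval w = q

/-- `L` is accepted by some (completely specified, accessible) DFA all of whose
states are observable.  This is membership in the family `O` over the alphabet `α`. -/
def AcceptsObservably (α : Type) (L : Language α) : Prop :=
  ∃ (σ : Type) (_ : Fintype σ) (M : DFA α σ),
    Accessible M ∧ (∀ q : σ, ObsState M q) ∧ M.accepts = L

/-- Membership in the family `T_k`: `L` is accepted by some accessible DFA with at
most `k` semi-observable states. -/
def InT (α : Type) (k : ℕ) (L : Language α) : Prop :=
  ∃ (σ : Type) (_ : Fintype σ) (M : DFA α σ),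
    Accessible M ∧ M.accepts = L ∧ {q : σ | SemiObsState M q}.ncard ≤ k

/-- The alphabet (the whole type `α`) is minimal for `L`: every letter occurs in some word of `L`. -/
def MinimalAlphabet {α : Type} (L : Language α) : Prop :=
  ∀ a : α, ∃ w ∈ L, a ∈ w

section Aux
variable {α σ₁ σ₂ : Type}

/-- Product DFA accepting the union. -/
def unionDFA (M₁ : DFA α σ₁) (M₂ : DFA α σ₂) : DFA α (σ₁ × σ₂) where
  step := fun p a => (M₁.step p.1 a, M₂.step p.2 a)
  start := (M₁.start, M₂.start)
  accept := {p | p.1 ∈ M₁.accept ∨ p.2 ∈ M₂.accept}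

lemma unionDFA_evalFrom (M₁ : DFA α σ₁) (M₂ : DFA α σ₂) (p : σ₁ × σ₂) (w : List α) :
    (unionDFA M₁ M₂).evalFrom p w = (M₁.evalFrom p.1 w, M₂.evalFrom p.2 w) := by
  induction w generalizing p with
  | nil => rfl
  | cons a t ih => simp only [DFA.evalFrom, List.foldl_cons]; exact ih _

/-- The reachable part of the product DFA. -/
def reachDFA (M₁ : DFA α σ₁) (M₂ : DFA α σ₂) :
    DFA α {p : σ₁ × σ₂ // ∃ w : List α, (unionDFA M₁ M₂).eval w = p} where
  step := fun q a => ⟨(unionDFA M₁ M₂).step q.val a, by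
    obtain ⟨w, hw⟩ := q.property
    exact ⟨w ++ [a], by rw [show (unionDFA M₁ M₂).eval (w ++ [a]) = _ from DFA.evalFrom_append_singleton _ _ _ _]; exact congrArg (fun s => (unionDFA M₁ M₂).step s a) hw⟩⟩
  start := ⟨(unionDFA M₁ M₂).start, ⟨[], rfl⟩⟩
  accept := {q | q.val ∈ (unionDFA M₁ M₂).accept}

lemma reachDFA_evalFrom (M₁ : DFA α σ₁) (M₂ : DFA α σ₂)
    (q : {p : σ₁ × σ₂ // ∃ w : List α, (unionDFA M₁ M₂).eval w = p}) (w : List α) :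
    ((reachDFA M₁ M₂).evalFrom q w).val = (unionDFA M₁ M₂).evalFrom q.val w := by
  induction w generalizing q with
  | nil => rfl
  | cons a t ih => simp only [DFA.evalFrom, List.foldl_cons]; exact ih _

end Aux

/-- For an alphabet with at least two symbols, `O(Σ)` is closed under union
(`+` on `Language` is union). -/
theorem OSigma_closed_union {α : Type} [Fintype α] (hcard : 2 ≤ Fintype.card α)
    (L₁ L₂ : Language α)
    (h₁ : AcceptsObservably α L₁ ∧ MinimalAlphabet L₁)
    (h₂ : AcceptsObservably α L₂ ∧ MinimalAlphabet L₂) :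
    AcceptsObservably α (L₁ + L₂) ∧ MinimalAlphabet (L₁ + L₂) := by
  classical
  obtain ⟨⟨σ₁, _, M₁, hacc₁, hobs₁, hL₁⟩, hmin₁⟩ := h₁
  obtain ⟨⟨σ₂, _, M₂, hacc₂, hobs₂, hL₂⟩, hmin₂⟩ := h₂
  constructor
  · refine ⟨{p : σ₁ × σ₂ // ∃ w : List α, (unionDFA M₁ M₂).eval w = p},
      Fintype.ofFinite _, reachDFA M₁ M₂, ?_, ?_, ?_⟩
    · rintro ⟨p, w, hw⟩
      exact ⟨w, Subtype.ext ((reachDFA_evalFrom M₁ M₂ _ w).trans hw)⟩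
    · rintro ⟨⟨q₁, q₂⟩, hq⟩
      obtain ⟨w, hw⟩ := hobs₁ q₁
      refine ⟨w, ?_⟩
      show ((reachDFA M₁ M₂).evalFrom _ w).val ∈ (unionDFA M₁ M₂).accept
      rw [reachDFA_evalFrom, unionDFA_evalFrom]
      exact Or.inl hw
    · ext w
      have : (reachDFA M₁ M₂).eval w ∈ (reachDFA M₁ M₂).accept ↔
          M₁.eval w ∈ M₁.accept ∨ M₂.eval w ∈ M₂.accept := by
        show ((reachDFA M₁ M₂).evalFrom _ w).val ∈ (unionDFA M₁ M₂).accept ↔ _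
        rw [reachDFA_evalFrom, unionDFA_evalFrom]
        exact Iff.rfl
      rw [Language.mem_add, ← hL₁, ← hL₂]
      exact this
  · intro a
    obtain ⟨w, hw, ha⟩ := hmin₁ a
    exact ⟨w, (Language.mem_add _ _ _).2 (Or.inl hw), ha⟩
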